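/- Let X be a complex Banach space and let A, B ∈ B(X) satisfy A∘B = I and dim ker A = 1. Suppose there is a nonzero vector x ∈ ker A such that the closed linear span of {Bⁿx : n ≥ 0} equals X. Then A ∈ B₁(Ω_A), where Ω_A is the connected component containing the origin of the semi-Fredholm domain ρ_{s-F}(A) = {λ ∈ ℂ : ran(A − λ) is closed and at least one of ker(A − λ), X/ran(A − λ) is finite-dimensional}. In particular, for every λ ∈ ℂ with |λ| < 1/‖B‖, A − λ is surjective with dim ker(A − λ) = 1, and the closed linear span of ⋃_{|λ|<1/‖B‖} ker(A − λ) equals X. -/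

import Mathlib

open Filter Topology Function
set_option linter.unusedSectionVars false
set_option maxHeartbeats 1000000


/-- The Cowen–Douglas class `B₁(Ω)`: `Ω ⊆ σ(T)`; the closed linear span of
`⋃_{λ∈Ω} ker(T − λ)` is all of `X`; `T − λ` is surjective for every `λ ∈ Ω`; and
`dim ker(T − λ) = 1` for every `λ ∈ Ω`. -/
def MemCowenDouglasOne {X : Type*} [NormedAddCommGroup X] [NormedSpace ℂ X]
    (Ω : Set ℂ) (T : X →L[ℂ] X) : Prop :=
  Ω ⊆ spectrum ℂ T ∧
  (Submodule.span ℂ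
      (⋃ μ ∈ Ω, ((LinearMap.ker ((T - μ • (1 : X →L[ℂ] X) : X →L[ℂ] X) : X →ₗ[ℂ] X) : Submodule ℂ X) : Set X))
    ).topologicalClosure = ⊤ ∧
  (∀ μ ∈ Ω, Function.Surjective (T - μ • (1 : X →L[ℂ] X))) ∧
  (∀ μ ∈ Ω, Module.finrank ℂ (LinearMap.ker ((T - μ • (1 : X →L[ℂ] X) : X →L[ℂ] X) : X →ₗ[ℂ] X)) = 1)

/-- An operator is semi-Fredholm if its range is closed and at least one of its kernel
and its cokernel is finite-dimensional. -/
def IsSemiFredholmOp {X : Type*} [NormedAddCommGroup X] [NormedSpace ℂ X]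
    (A : X →L[ℂ] X) : Prop :=
  IsClosed ((LinearMap.range (A : X →ₗ[ℂ] X) : Submodule ℂ X) : Set X) ∧
    (FiniteDimensional ℂ (LinearMap.ker (A : X →ₗ[ℂ] X)) ∨ FiniteDimensional ℂ (X ⧸ LinearMap.range (A : X →ₗ[ℂ] X)))

/-- The semi-Fredholm domain `ρ_{s-F}(A) = {λ ∈ ℂ : A − λ is semi-Fredholm}`. -/
def semiFredholmDomain {X : Type*} [NormedAddCommGroup X] [NormedSpace ℂ X]
    (A : X →L[ℂ] X) : Set ℂ :=
  {lam : ℂ | IsSemiFredholmOp (A - lam • (1 : X →L[ℂ] X))}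

namespace CD7Aux

variable {X : Type*} [NormedAddCommGroup X] [NormedSpace ℂ X] [CompleteSpace X]

lemma norm_pow_apply_le (B : X →L[ℂ] X) (n : ℕ) : ∀ x : X, ‖(B ^ n) x‖ ≤ ‖B‖ ^ n * ‖x‖ := by
  induction n with
  | zero => intro x; simp
  | succ n ih =>
    intro x
    have h1 : (B ^ (n + 1)) x = (B ^ n) (B x) := by
      rw [pow_succ, ContinuousLinearMap.mul_apply]
    rw [h1]
    calc ‖(B ^ n) (B x)‖ ≤ ‖B‖ ^ n * ‖B x‖ := ih (B x)
      _ ≤ ‖B‖ ^ n * (‖B‖ * ‖x‖) := by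
          gcongr
          exact B.le_opNorm x
      _ = ‖B‖ ^ (n + 1) * ‖x‖ := by rw [pow_succ]; ring

lemma summable_dk (B : X →L[ℂ] X) (x : X) (k : ℕ) {lam : ℂ} (h : ‖lam‖ * ‖B‖ < 1) :
    Summable fun m : ℕ => lam ^ m • (B ^ (m + k)) x := by
  have h0 : 0 ≤ ‖lam‖ * ‖B‖ := by positivity
  refine Summable.of_norm_bounded (g := fun m => (‖lam‖ * ‖B‖) ^ m * (‖B‖ ^ k * ‖x‖))
    ((summable_geometric_of_lt_one h0 h).mul_right _) fun m => ?_
  rw [norm_smul, norm_pow]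
  calc ‖lam‖ ^ m * ‖(B ^ (m + k)) x‖ ≤ ‖lam‖ ^ m * (‖B‖ ^ (m + k) * ‖x‖) := by
        gcongr
        exact norm_pow_apply_le B (m + k) x
    _ = (‖lam‖ * ‖B‖) ^ m * (‖B‖ ^ k * ‖x‖) := by rw [pow_add, mul_pow]; ring

/-- the `k`-th tail series `∑ λ^m B^{m+k} x`. -/
noncomputable def dk (B : X →L[ℂ] X) (x : X) (k : ℕ) (lam : ℂ) : X :=
  ∑' m : ℕ, lam ^ m • (B ^ (m + k)) x

lemma dk_succ (B : X →L[ℂ] X) (x : X) (k : ℕ) {lam : ℂ} (h : ‖lam‖ * ‖B‖ < 1) :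
    dk B x k lam = (B ^ k) x + lam • dk B x (k + 1) lam := by
  rw [dk, Summable.tsum_eq_zero_add (summable_dk B x k h)]
  congr 1
  · simp
  · rw [dk, ← Summable.tsum_const_smul lam (summable_dk B x (k + 1) h)]
    apply tsum_congr
    intro m
    have he : m + 1 + k = m + (k + 1) := by omega
    rw [he, pow_succ', mul_smul]

lemma dk_zero_split (B : X →L[ℂ] X) (x : X) (k : ℕ) {lam : ℂ} (h : ‖lam‖ * ‖B‖ < 1) :
    dk B x 0 lam = (∑ j ∈ Finset.range k, lam ^ j • (B ^ j) x) + lam ^ k • dk B x k lam := by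
  have hsum := summable_dk B x 0 h
  have h1 := Summable.sum_add_tsum_nat_add (f := fun m : ℕ => lam ^ m • (B ^ (m + 0)) x) k hsum
  rw [dk, ← h1]
  congr 1
  rw [dk, ← Summable.tsum_const_smul (lam ^ k) (summable_dk B x k h)]
  apply tsum_congr
  intro m
  show lam ^ (m + k) • (B ^ (m + k + 0)) x = lam ^ k • lam ^ m • (B ^ (m + k)) x
  have he : m + k + 0 = m + k := by omega
  rw [he, pow_add, mul_comm (lam ^ m), mul_smul]


lemma norm_le_half (B : X →L[ℂ] X) {lam : ℂ} (h : ‖lam‖ ≤ 1 / (2 * (‖B‖ + 1))) :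
    ‖lam‖ * (‖B‖ + 1) ≤ 1 / 2 := by
  have hB : (0:ℝ) < ‖B‖ + 1 := by positivity
  rw [le_div_iff₀ (by positivity)] at h
  nlinarith [norm_nonneg lam]

lemma half_lt_one (B : X →L[ℂ] X) {lam : ℂ} (h2 : ‖lam‖ * (‖B‖ + 1) ≤ 1 / 2) :
    ‖lam‖ * ‖B‖ < 1 := by
  nlinarith [norm_nonneg lam, norm_nonneg B]

lemma dk_norm_le (B : X →L[ℂ] X) (x : X) (k : ℕ) {lam : ℂ} (h : ‖lam‖ * (‖B‖ + 1) ≤ 1 / 2) :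
    ‖dk B x k lam‖ ≤ 2 * ((‖B‖ + 1) ^ k * ‖x‖) := by
  have hg : HasSum (fun m : ℕ => ((1:ℝ) / 2) ^ m * ((‖B‖ + 1) ^ k * ‖x‖))
      (2 * ((‖B‖ + 1) ^ k * ‖x‖)) := hasSum_geometric_two.mul_right _
  refine tsum_of_norm_bounded hg fun m => ?_
  rw [norm_smul, norm_pow]
  have hb1 : ‖B‖ ≤ ‖B‖ + 1 := by linarith
  calc ‖lam‖ ^ m * ‖(B ^ (m + k)) x‖ ≤ ‖lam‖ ^ m * (‖B‖ ^ (m + k) * ‖x‖) := by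
        gcongr; exact norm_pow_apply_le B (m + k) x
    _ ≤ ‖lam‖ ^ m * ((‖B‖ + 1) ^ (m + k) * ‖x‖) := by
        gcongr
    _ = (‖lam‖ * (‖B‖ + 1)) ^ m * ((‖B‖ + 1) ^ k * ‖x‖) := by
        rw [pow_add, mul_pow]; ring
    _ ≤ ((1:ℝ) / 2) ^ m * ((‖B‖ + 1) ^ k * ‖x‖) := by
        have h0 : (0:ℝ) ≤ ‖lam‖ * (‖B‖ + 1) := by positivity
        gcongr

lemma dk_sub_le (B : X →L[ℂ] X) (x : X) (k : ℕ) {lam : ℂ} (h : ‖lam‖ * (‖B‖ + 1) ≤ 1 / 2) :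
    ‖dk B x k lam - (B ^ k) x‖ ≤ ‖lam‖ * (2 * ((‖B‖ + 1) ^ (k + 1) * ‖x‖)) := by
  have h1 : ‖lam‖ * ‖B‖ < 1 := half_lt_one B h
  rw [dk_succ B x k h1]
  have : (B ^ k) x + lam • dk B x (k + 1) lam - (B ^ k) x = lam • dk B x (k + 1) lam := by abel
  rw [this, norm_smul]
  gcongr
  exact dk_norm_le B x (k + 1) h

lemma coeff_mem (B : X →L[ℂ] X) (x : X) (M : Submodule ℂ X) (hM : IsClosed (M : Set X))
    (s : ℕ → ℂ) (hs0 : ∀ j, s j ≠ 0) (hsn : ∀ j, ‖s j‖ * (‖B‖ + 1) ≤ 1 / 2)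
    (hslim : Tendsto s atTop (𝓝 0)) (hmem : ∀ j, dk B x 0 (s j) ∈ M) :
    ∀ k, (B ^ k) x ∈ M := by
  intro k
  induction k using Nat.strong_induction_on with
  | _ k ih =>
  have hd : ∀ j, dk B x k (s j) ∈ M := by
    intro j
    have h1 : ‖s j‖ * ‖B‖ < 1 := half_lt_one B (hsn j)
    have hsplit := dk_zero_split B x k (lam := s j) h1
    have h2 : (s j) ^ k • dk B x k (s j)
        = dk B x 0 (s j) - ∑ j' ∈ Finset.range k, (s j) ^ j' • (B ^ j') x := by
      rw [hsplit]; abel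
    have h3 : dk B x k (s j) = ((s j) ^ k)⁻¹ •
        (dk B x 0 (s j) - ∑ j' ∈ Finset.range k, (s j) ^ j' • (B ^ j') x) := by
      rw [← h2, smul_smul, inv_mul_cancel₀ (pow_ne_zero _ (hs0 j)), one_smul]
    rw [h3]
    refine M.smul_mem _ (M.sub_mem (hmem j) (Submodule.sum_mem _ fun j' hj' => ?_))
    exact M.smul_mem _ (ih j' (Finset.mem_range.mp hj'))
  have hnorm : ∀ j, ‖dk B x k (s j) - (B ^ k) x‖
      ≤ ‖s j‖ * (2 * ((‖B‖ + 1) ^ (k + 1) * ‖x‖)) := fun j => dk_sub_le B x k (hsn j)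
  have hzero : Tendsto (fun j => dk B x k (s j) - (B ^ k) x) atTop (𝓝 0) := by
    apply squeeze_zero_norm hnorm
    have : Tendsto (fun j => ‖s j‖) atTop (𝓝 0) := by
      simpa using hslim.norm
    simpa using this.mul_const (2 * ((‖B‖ + 1) ^ (k + 1) * ‖x‖))
  have hlim : Tendsto (fun j => dk B x k (s j)) atTop (𝓝 ((B ^ k) x)) :=
    tendsto_sub_nhds_zero_iff.mp hzero
  exact hM.mem_of_tendsto hlim (Eventually.of_forall hd)

lemma exists_seq (b : ℝ) (hb : 0 < b) (μ : ℂ) :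
    ∃ s : ℕ → ℂ, (∀ j, s j ≠ 0 ∧ s j ≠ μ ∧ ‖s j‖ ≤ b) ∧ Tendsto s atTop (𝓝 0) := by
  classical
  set c : ℕ → ℝ := fun j => min b (1 / (j + 1 : ℝ)) with hc
  have hc0 : ∀ j, 0 < c j := fun j => by
    rw [hc]; positivity
  have hcb : ∀ j, c j ≤ b := fun j => min_le_left _ _
  have hcj : ∀ j, c j ≤ 1 / (j + 1 : ℝ) := fun j => min_le_right _ _
  set s : ℕ → ℂ := fun j => if ((c j : ℂ)) = μ then (c j : ℂ) / 2 else (c j : ℂ) with hs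
  have hnorm : ∀ j, ‖((c j : ℂ))‖ = c j := fun j => by
    rw [Complex.norm_real, Real.norm_eq_abs, abs_of_pos (hc0 j)]
  have hkey : ∀ j, s j ≠ 0 ∧ s j ≠ μ ∧ ‖s j‖ ≤ c j := by
    intro j
    have hne : ((c j : ℂ)) ≠ 0 := by
      exact_mod_cast ne_of_gt (hc0 j)
    by_cases hif : ((c j : ℂ)) = μ
    · have hsj : s j = (c j : ℂ) / 2 := by simp only [hs]; rw [if_pos hif]
      refine ⟨by rw [hsj]; exact div_ne_zero hne (by norm_num), ?_, ?_⟩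
      · rw [hsj, ← hif]
        intro hcon
        apply hne
        field_simp at hcon
        norm_num at hcon
      · rw [hsj, norm_div, hnorm j]
        have h2 : ‖(2:ℂ)‖ = 2 := by norm_num
        rw [h2]
        linarith [hc0 j]
    · have hsj : s j = (c j : ℂ) := by simp only [hs]; rw [if_neg hif]
      exact ⟨by rw [hsj]; exact hne, by rw [hsj]; exact hif, by rw [hsj, hnorm j]⟩
  refine ⟨s, fun j => ⟨(hkey j).1, (hkey j).2.1, le_trans (hkey j).2.2 (hcb j)⟩, ?_⟩
  apply squeeze_zero_norm (a := fun j : ℕ => 1 / (j + 1 : ℝ))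
  · exact fun j => le_trans (hkey j).2.2 (hcj j)
  · exact tendsto_one_div_add_atTop_nhds_zero_nat


lemma apply_dk0 (A B : X →L[ℂ] X) (x : X) (hABap : ∀ y, A (B y) = y) (hxker : A x = 0)
    {lam : ℂ} (h : ‖lam‖ * ‖B‖ < 1) :
    (A - lam • (1 : X →L[ℂ] X)) (dk B x 0 lam) = 0 := by
  have hsum := summable_dk B x 0 h
  have hmap : A (dk B x 0 lam) = ∑' n : ℕ, A (lam ^ n • (B ^ (n + 0)) x) :=
    A.map_tsum hsum
  have hsum2 : Summable fun n : ℕ => A (lam ^ n • (B ^ (n + 0)) x) :=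
    hsum.map (A.toLinearMap.toAddMonoidHom) A.continuous
  have hA : A (dk B x 0 lam) = lam • dk B x 0 lam := by
    rw [hmap, Summable.tsum_eq_zero_add hsum2]
    have h0 : A (lam ^ 0 • (B ^ (0 + 0)) x) = 0 := by
      simp [hxker]
    rw [h0, zero_add]
    have hterm : ∀ n : ℕ, A (lam ^ (n + 1) • (B ^ (n + 1 + 0)) x)
        = lam • (lam ^ n • (B ^ (n + 0)) x) := by
      intro n
      rw [map_smul]
      have hpow : (B ^ (n + 1 + 0)) x = B ((B ^ (n + 0)) x) := by
        have : n + 1 + 0 = n + 0 + 1 := by omega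
        rw [this, pow_succ', ContinuousLinearMap.mul_apply]
        rfl
      rw [hpow, hABap, pow_succ', mul_smul]
    rw [tsum_congr hterm, Summable.tsum_const_smul lam hsum]
    rfl
  have : (A - lam • (1 : X →L[ℂ] X)) (dk B x 0 lam)
      = A (dk B x 0 lam) - lam • dk B x 0 lam := by
    simp [ContinuousLinearMap.sub_apply, ContinuousLinearMap.smul_apply]
  rw [this, hA, sub_self]

lemma loc (T S : X →L[ℂ] X) (hTS : T * S = 1)
    (hkT : Module.finrank ℂ (LinearMap.ker (T : X →ₗ[ℂ] X)) = 1)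
    {z : ℂ} (hz : ‖z‖ * ‖S‖ < 1) :
    Function.Surjective (T - z • (1 : X →L[ℂ] X)) ∧
      Module.finrank ℂ (LinearMap.ker ((T - z • (1 : X →L[ℂ] X) : X →L[ℂ] X) : X →ₗ[ℂ] X)) = 1 := by
  have hnorm : ‖z • S‖ < 1 := by
    have : ‖z • S‖ = ‖z‖ * ‖S‖ := norm_smul z S
    rw [this]; exact hz
  set U : (X →L[ℂ] X)ˣ := Units.oneSub (z • S) hnorm with hU
  have hUval : (U : X →L[ℂ] X) = 1 - z • S := rfl
  have hfact : T - z • (1 : X →L[ℂ] X) = T * (U : X →L[ℂ] X) := by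
    rw [hUval, mul_sub, mul_one, mul_smul_comm, hTS]
  have hUU : ∀ c : X, (U : X →L[ℂ] X) ((↑U⁻¹ : X →L[ℂ] X) c) = c := by
    intro c
    have h1 : (U : X →L[ℂ] X) * (↑U⁻¹ : X →L[ℂ] X) = 1 := by
      rw [← Units.val_mul, mul_inv_cancel, Units.val_one]
    calc (U : X →L[ℂ] X) ((↑U⁻¹ : X →L[ℂ] X) c)
        = ((U : X →L[ℂ] X) * (↑U⁻¹ : X →L[ℂ] X)) c := rfl
      _ = c := by rw [h1]; rfl
  have hU'U : ∀ c : X, (↑U⁻¹ : X →L[ℂ] X) ((U : X →L[ℂ] X) c) = c := by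
    intro c
    have h1 : (↑U⁻¹ : X →L[ℂ] X) * (U : X →L[ℂ] X) = 1 := by
      rw [← Units.val_mul, inv_mul_cancel, Units.val_one]
    calc (↑U⁻¹ : X →L[ℂ] X) ((U : X →L[ℂ] X) c)
        = ((↑U⁻¹ : X →L[ℂ] X) * (U : X →L[ℂ] X)) c := rfl
      _ = c := by rw [h1]; rfl
  have hfact_app : ∀ w : X, (T - z • (1 : X →L[ℂ] X)) w = T ((U : X →L[ℂ] X) w) := by
    intro w; rw [hfact]; rfl
  have hTsurj : Function.Surjective T := by
    intro y
    refine ⟨S y, ?_⟩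
    have : (T * S) y = T (S y) := rfl
    rw [← this, hTS]; rfl
  constructor
  · intro y
    obtain ⟨w, hw⟩ := hTsurj y
    exact ⟨(↑U⁻¹ : X →L[ℂ] X) w, by rw [hfact_app, hUU, hw]⟩
  · have hUinj : Function.Injective ((↑U⁻¹ : X →L[ℂ] X) : X → X) := by
      intro a b hab
      have := congrArg (U : X →L[ℂ] X) hab
      rwa [hUU, hUU] at this
    have hkerEq : LinearMap.ker ((T - z • (1 : X →L[ℂ] X) : X →L[ℂ] X) : X →ₗ[ℂ] X)
        = Submodule.map ((↑U⁻¹ : X →L[ℂ] X) : X →ₗ[ℂ] X) (LinearMap.ker (T : X →ₗ[ℂ] X)) := by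
      ext w
      simp only [Submodule.mem_map, LinearMap.mem_ker, ContinuousLinearMap.coe_coe]
      constructor
      · intro hw
        refine ⟨(U : X →L[ℂ] X) w, ?_, hU'U w⟩
        rw [← hfact_app]; exact hw
      · rintro ⟨v, hv, rfl⟩
        rw [hfact_app, hUU]; exact hv
    rw [hkerEq]
    rw [← LinearEquiv.finrank_eq
      (Submodule.equivMapOfInjective ((↑U⁻¹ : X →L[ℂ] X) : X →ₗ[ℂ] X) hUinj (LinearMap.ker (T : X →ₗ[ℂ] X)))]
    exact hkT

lemma ker_span (T : X →L[ℂ] X) (h : Module.finrank ℂ (LinearMap.ker (T : X →ₗ[ℂ] X)) = 1) :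
    ∃ e : X, e ≠ 0 ∧ LinearMap.ker (T : X →ₗ[ℂ] X) = Submodule.span ℂ {e} := by
  haveI : FiniteDimensional ℂ (LinearMap.ker (T : X →ₗ[ℂ] X)) := Module.finite_of_finrank_eq_succ h
  have hne : LinearMap.ker (T : X →ₗ[ℂ] X) ≠ ⊥ := by
    intro hbot
    rw [hbot, finrank_bot] at h
    norm_num at h
  obtain ⟨e, hemem, hene⟩ := (Submodule.ne_bot_iff _).mp hne
  refine ⟨e, hene, ?_⟩
  have hle : Submodule.span ℂ {e} ≤ LinearMap.ker (T : X →ₗ[ℂ] X) := by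
    rw [Submodule.span_le, Set.singleton_subset_iff]; exact hemem
  exact (Submodule.eq_of_le_of_finrank_le hle
    (by rw [h, finrank_span_singleton hene])).symm

lemma rightinv (T : X →L[ℂ] X) (hsurj : Function.Surjective T) (e : X) (he : e ≠ 0)
    (hker : LinearMap.ker (T : X →ₗ[ℂ] X) = Submodule.span ℂ {e}) :
    ∃ S : X →L[ℂ] X, T * S = 1 := by
  obtain ⟨f0, _, hf0e⟩ := exists_dual_vector ℂ e (norm_ne_zero_iff.mpr he)
  have hne : ((‖e‖ : ℂ)) ≠ 0 := by
    exact_mod_cast norm_ne_zero_iff.mpr he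
  set f : X →L[ℂ] ℂ := ((‖e‖ : ℂ))⁻¹ • f0 with hf
  have hfe : f e = 1 := by
    rw [hf]
    simp only [ContinuousLinearMap.smul_apply, smul_eq_mul]
    rw [hf0e]
    exact inv_mul_cancel₀ hne
  have hTe : T e = 0 := by
    have : e ∈ LinearMap.ker (T : X →ₗ[ℂ] X) := by
      rw [hker]; exact Submodule.mem_span_singleton_self e
    exact this
  set N := LinearMap.ker (f : X →ₗ[ℂ] ℂ) with hN
  haveI : CompleteSpace N := (ContinuousLinearMap.isClosed_ker f).completeSpace_coe
  set T1 : N →L[ℂ] X := T.comp (N.subtypeL) with hT1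
  have hinj : LinearMap.ker (T1 : N →ₗ[ℂ] X) = ⊥ := by
    rw [LinearMap.ker_eq_bot']
    intro u hu
    have hu1 : T (u : X) = 0 := hu
    have humem : (u : X) ∈ LinearMap.ker (T : X →ₗ[ℂ] X) := hu1
    rw [hker, Submodule.mem_span_singleton] at humem
    obtain ⟨a, ha⟩ := humem
    have hfu : f (u : X) = 0 := u.2
    rw [← ha, map_smul, hfe] at hfu
    simp only [smul_eq_mul, mul_one] at hfu
    have : (u : X) = 0 := by rw [← ha, hfu, zero_smul]
    exact Subtype.ext this
  have hrange : LinearMap.range (T1 : N →ₗ[ℂ] X) = ⊤ := by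
    rw [LinearMap.range_eq_top]
    intro y
    obtain ⟨z, hz⟩ := hsurj y
    have hz' : f (z - f z • e) = 0 := by
      rw [map_sub, map_smul, hfe]
      simp
    refine ⟨⟨z - f z • e, hz'⟩, ?_⟩
    show T (z - f z • e) = y
    rw [map_sub, map_smul, hTe, smul_zero, sub_zero, hz]
  set equiv := ContinuousLinearEquiv.ofBijective T1 hinj hrange with hequiv
  refine ⟨(N.subtypeL).comp (equiv.symm : X →L[ℂ] N), ?_⟩
  ext y
  have hkey := ContinuousLinearEquiv.ofBijective_apply_symm_apply T1 hinj hrange y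
  simp only [ContinuousLinearMap.mul_apply, ContinuousLinearMap.comp_apply,
    Submodule.subtypeL_apply, ContinuousLinearMap.one_apply,
    ContinuousLinearEquiv.coe_coe]
  exact hkey


/-- the set of good points: `A - μ` surjective with one-dimensional kernel. -/
def good (A : X →L[ℂ] X) : Set ℂ :=
  {μ : ℂ | Function.Surjective (A - μ • (1 : X →L[ℂ] X)) ∧
    Module.finrank ℂ (LinearMap.ker ((A - μ • (1 : X →L[ℂ] X) : X →L[ℂ] X) : X →ₗ[ℂ] X)) = 1}

lemma shift (A : X →L[ℂ] X) (a b : ℂ) :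
    A - b • (1 : X →L[ℂ] X) = (A - a • (1 : X →L[ℂ] X)) - (b - a) • (1 : X →L[ℂ] X) := by
  rw [sub_smul]; abel

lemma good_isOpen (A : X →L[ℂ] X) : IsOpen (good A) := by
  rw [Metric.isOpen_iff]
  intro μ hμ
  obtain ⟨e, he, hkere⟩ := ker_span _ hμ.2
  obtain ⟨S, hS⟩ := rightinv _ hμ.1 e he hkere
  refine ⟨1 / (‖S‖ + 1), by positivity, fun lam hlam => ?_⟩
  rw [Metric.mem_ball, dist_eq_norm] at hlam
  have h : ‖lam - μ‖ * ‖S‖ < 1 := by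
    have h1 : ‖lam - μ‖ * (‖S‖ + 1) < 1 := by
      rw [lt_div_iff₀ (by positivity : (0:ℝ) < ‖S‖ + 1)] at hlam
      linarith
    nlinarith [norm_nonneg (lam - μ), norm_nonneg S]
  have := loc (A - μ • (1 : X →L[ℂ] X)) S hS hμ.2 h
  rwa [← shift A μ lam] at this

lemma surj_all (A B : X →L[ℂ] X) (x : X) (hABap : ∀ y, A (B y) = y) (hxker : A x = 0)
    (hcyc : (Submodule.span ℂ (Set.range fun n : ℕ => (B ^ n) x)).topologicalClosure = ⊤)
    (μ : ℂ)
    (hclosed : IsClosed ((LinearMap.range ((A - μ • (1 : X →L[ℂ] X) : X →L[ℂ] X) : X →ₗ[ℂ] X) : Submodule ℂ X) : Set X)) :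
    Function.Surjective (A - μ • (1 : X →L[ℂ] X)) := by
  set p := LinearMap.range ((A - μ • (1 : X →L[ℂ] X) : X →L[ℂ] X) : X →ₗ[ℂ] X) with hp
  obtain ⟨s, hs, hslim⟩ := exists_seq (1 / (2 * (‖B‖ + 1))) (by positivity) μ
  have hsn : ∀ j, ‖s j‖ * (‖B‖ + 1) ≤ 1 / 2 := fun j => norm_le_half B (hs j).2.2
  have hmem : ∀ j, dk B x 0 (s j) ∈ p := by
    intro j
    have h1 : ‖s j‖ * ‖B‖ < 1 := half_lt_one B (hsn j)
    have he := apply_dk0 A B x hABap hxker h1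
    set v := dk B x 0 (s j) with hv
    have h2 : (A - μ • (1 : X →L[ℂ] X)) v = (s j - μ) • v := by
      have hd : (A - μ • (1 : X →L[ℂ] X)) v - (A - s j • (1 : X →L[ℂ] X)) v
          = (s j - μ) • v := by
        simp only [ContinuousLinearMap.sub_apply, ContinuousLinearMap.smul_apply,
          ContinuousLinearMap.one_apply, sub_smul]
        abel
      rw [← hd, he, sub_zero]
    have hne : s j - μ ≠ 0 := sub_ne_zero.mpr (hs j).2.1
    have h3 : v = (s j - μ)⁻¹ • ((A - μ • (1 : X →L[ℂ] X)) v) := by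
      rw [h2, smul_smul, inv_mul_cancel₀ hne, one_smul]
    rw [h3]
    exact p.smul_mem _ (LinearMap.mem_range_self _ v)
  have hall := coeff_mem B x p hclosed s (fun j => (hs j).1) hsn hslim hmem
  have hspanle : Submodule.span ℂ (Set.range fun n : ℕ => (B ^ n) x) ≤ p :=
    Submodule.span_le.mpr (by rintro _ ⟨n, rfl⟩; exact hall n)
  have htop : p = ⊤ := by
    have h2 := Submodule.topologicalClosure_minimal _ hspanle hclosed
    rw [hcyc] at h2
    exact eq_top_iff.mpr h2
  exact LinearMap.range_eq_top.mp htop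

lemma good_spec (A : X →L[ℂ] X) {μ : ℂ} (hμ : μ ∈ good A) : μ ∈ spectrum ℂ A := by
  rw [spectrum.mem_iff]
  intro hunit
  obtain ⟨u, hu⟩ := hunit
  have hinj : ∀ w : X, (A - μ • (1 : X →L[ℂ] X)) w = 0 → w = 0 := by
    intro w hw
    have h1 : ((algebraMap ℂ (X →L[ℂ] X)) μ - A) w = 0 := by
      rw [Algebra.algebraMap_eq_smul_one]
      have h2 : (μ • (1 : X →L[ℂ] X) - A) w = -((A - μ • (1 : X →L[ℂ] X)) w) := by
        simp only [ContinuousLinearMap.sub_apply]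
        abel
      rw [h2, hw, neg_zero]
    have h3 : ((↑u⁻¹ * ↑u : X →L[ℂ] X)) w = 0 := by
      have : ((↑u⁻¹ * ↑u : X →L[ℂ] X)) w = (↑u⁻¹ : X →L[ℂ] X) ((↑u : X →L[ℂ] X) w) := rfl
      rw [this, hu, h1, map_zero]
    rwa [← Units.val_mul, inv_mul_cancel, Units.val_one, ContinuousLinearMap.one_apply] at h3
  have hker0 : LinearMap.ker ((A - μ • (1 : X →L[ℂ] X) : X →L[ℂ] X) : X →ₗ[ℂ] X) = ⊥ := LinearMap.ker_eq_bot'.mpr hinj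
  have hk := hμ.2
  rw [hker0, finrank_bot] at hk
  norm_num at hk


lemma good_limit (A B : X →L[ℂ] X) (x : X) (hABap : ∀ y, A (B y) = y) (hxker : A x = 0)
    (hcyc : (Submodule.span ℂ (Set.range fun n : ℕ => (B ^ n) x)).topologicalClosure = ⊤)
    (μ : ℂ)
    (hclosed : IsClosed ((LinearMap.range ((A - μ • (1 : X →L[ℂ] X) : X →L[ℂ] X) : X →ₗ[ℂ] X) : Submodule ℂ X) : Set X))
    (hcl : μ ∈ closure (good A)) : μ ∈ good A := by
  set T := A - μ • (1 : X →L[ℂ] X) with hT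
  have hsurj : Function.Surjective T := surj_all A B x hABap hxker hcyc μ hclosed
  refine ⟨hsurj, ?_⟩
  obtain ⟨s, hsg, hslim⟩ := mem_closure_iff_seq_limit.mp hcl
  have hshift : ∀ n, A - s n • (1 : X →L[ℂ] X) = T - (s n - μ) • (1 : X →L[ℂ] X) :=
    fun n => shift A μ (s n)
  by_cases hbot : LinearMap.ker (T : X →ₗ[ℂ] X) = ⊥
  · exfalso
    set E := ContinuousLinearEquiv.ofBijective T hbot (LinearMap.range_eq_top.mpr hsurj) with hE
    set S : X →L[ℂ] X := (E.symm : X →L[ℂ] X) with hSdef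
    have hstm : ∀ w : X, S (T w) = w := fun w =>
      ContinuousLinearEquiv.ofBijective_symm_apply_apply T hbot _ w
    have h0 : Tendsto (fun n => ‖s n - μ‖ * ‖S‖) atTop (𝓝 0) := by
      have h1 : Tendsto (fun n => s n - μ) atTop (𝓝 0) := by
        simpa using hslim.sub_const μ
      simpa using h1.norm.mul_const ‖S‖
    obtain ⟨n, hn⟩ := (h0.eventually_lt_const (by norm_num : (0:ℝ) < 1)).exists
    have hinj : ∀ w : X, (A - s n • (1 : X →L[ℂ] X)) w = 0 → w = 0 := by
      intro w hw
      rw [hshift n] at hw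
      have h1 : T w = (s n - μ) • w := by
        have h2 : (T - (s n - μ) • (1 : X →L[ℂ] X)) w = T w - (s n - μ) • w := by
          simp [ContinuousLinearMap.sub_apply, ContinuousLinearMap.smul_apply]
        rw [h2] at hw
        exact sub_eq_zero.mp hw
      have h2 : w = (s n - μ) • S w := by
        conv_lhs => rw [← hstm w, h1, map_smul]
      have h3 : ‖w‖ ≤ ‖s n - μ‖ * ‖S‖ * ‖w‖ := by
        calc ‖w‖ = ‖(s n - μ) • S w‖ := by rw [← h2]
          _ = ‖s n - μ‖ * ‖S w‖ := norm_smul _ _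
          _ ≤ ‖s n - μ‖ * (‖S‖ * ‖w‖) := by gcongr; exact S.le_opNorm w
          _ = ‖s n - μ‖ * ‖S‖ * ‖w‖ := by ring
      have h4 : ‖w‖ = 0 := by nlinarith [norm_nonneg w]
      exact norm_eq_zero.mp h4
    obtain ⟨-, h5⟩ := hsg n
    have h6 : LinearMap.ker ((A - s n • (1 : X →L[ℂ] X) : X →L[ℂ] X) : X →ₗ[ℂ] X) = ⊥ :=
      LinearMap.ker_eq_bot'.mpr hinj
    rw [h6, finrank_bot] at h5
    norm_num at h5
  obtain ⟨u1', hu1'mem, hu1'ne⟩ := (Submodule.ne_bot_iff _).mp hbot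
  by_cases hspan : ∀ u ∈ LinearMap.ker (T : X →ₗ[ℂ] X), u ∈ Submodule.span ℂ {u1'}
  · have heq : LinearMap.ker (T : X →ₗ[ℂ] X) = Submodule.span ℂ {u1'} := by
      apply le_antisymm
      · exact hspan
      · rw [Submodule.span_le, Set.singleton_subset_iff]; exact hu1'mem
    rw [heq, finrank_span_singleton hu1'ne]
  · exfalso
    push_neg at hspan
    obtain ⟨u2', hu2'mem, hu2'span⟩ := hspan
    obtain ⟨g1, hg1norm, hg1e⟩ := exists_dual_vector ℂ u1' (norm_ne_zero_iff.mpr hu1'ne)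
    have hg1u1 : g1 u1' ≠ 0 := by
      rw [hg1e]
      simp only [ne_eq, RCLike.ofReal_eq_zero]
      exact norm_ne_zero_iff.mpr hu1'ne
    set v := u2' - (g1 u2' / g1 u1') • u1' with hv
    have hvmem : v ∈ LinearMap.ker (T : X →ₗ[ℂ] X) :=
      Submodule.sub_mem _ hu2'mem (Submodule.smul_mem _ _ hu1'mem)
    have hvne : v ≠ 0 := by
      intro h0
      apply hu2'span
      rw [Submodule.mem_span_singleton]
      exact ⟨g1 u2' / g1 u1', (sub_eq_zero.mp h0).symm⟩
    have hg1v : g1 v = 0 := by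
      rw [hv, map_sub, map_smul, smul_eq_mul, div_mul_cancel₀ _ hg1u1, sub_self]
    obtain ⟨g2, hg2norm, hg2v'⟩ := exists_dual_vector ℂ v (norm_ne_zero_iff.mpr hvne)
    have hg2v : g2 v ≠ 0 := by
      rw [hg2v']
      simp only [ne_eq, RCLike.ofReal_eq_zero]
      exact norm_ne_zero_iff.mpr hvne
    set f1 : X →L[ℂ] ℂ := (g2 v)⁻¹ • (g2 - (g2 u1' / g1 u1') • g1) with hf1
    set f2 : X →L[ℂ] ℂ := (g1 u1')⁻¹ • g1 with hf2
    have hf1v : f1 v = 1 := by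
      rw [hf1]
      simp only [ContinuousLinearMap.smul_apply, ContinuousLinearMap.sub_apply, smul_eq_mul]
      rw [hg1v, mul_zero, sub_zero]
      exact inv_mul_cancel₀ hg2v
    have hf1u : f1 u1' = 0 := by
      rw [hf1]
      simp only [ContinuousLinearMap.smul_apply, ContinuousLinearMap.sub_apply, smul_eq_mul]
      rw [div_mul_cancel₀ _ hg1u1, sub_self, mul_zero]
    have hf2v : f2 v = 0 := by
      rw [hf2]
      simp only [ContinuousLinearMap.smul_apply, smul_eq_mul]
      rw [hg1v, mul_zero]
    have hf2u : f2 u1' = 1 := by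
      rw [hf2]
      simp only [ContinuousLinearMap.smul_apply, smul_eq_mul]
      exact inv_mul_cancel₀ hg1u1
    obtain ⟨C, hCpos, hC⟩ := T.exists_preimage_norm_le hsurj
    have dual_lb : ∀ g : X →L[ℂ] ℂ, ‖g‖ ≤ C * ‖g.comp T‖ := by
      intro g
      refine ContinuousLinearMap.opNorm_le_bound _ (by positivity) fun y => ?_
      obtain ⟨z, hz, hzn⟩ := hC y
      calc ‖g y‖ = ‖(g.comp T) z‖ := by rw [ContinuousLinearMap.comp_apply, hz]
        _ ≤ ‖g.comp T‖ * ‖z‖ := (g.comp T).le_opNorm z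
        _ ≤ ‖g.comp T‖ * (C * ‖y‖) := by gcongr
        _ = C * ‖g.comp T‖ * ‖y‖ := by ring
    set K := ‖f1‖ + ‖f2‖ with hK
    have key : ∀ n : ℕ, C * ‖s n - μ‖ ≤ 1 / 2 → ∃ q : ℂ × ℂ, ‖q‖ = 1 ∧
        ∀ u, u ∈ LinearMap.ker (T : X →ₗ[ℂ] X) →
          ‖q.1 * f1 u + q.2 * f2 u‖ ≤ ‖s n - μ‖ * (2 * C * K) * ‖u‖ := by
      intro n hn
      obtain ⟨hsurjn, hrankn⟩ := hsg n
      obtain ⟨en, hen, hkern⟩ := ker_span _ hrankn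
      obtain ⟨R, hR⟩ := rightinv _ hsurjn en hen hkern
      have hq : ∃ q : ℂ × ℂ, ‖q‖ = 1 ∧ q.1 * f1 en + q.2 * f2 en = 0 := by
        by_cases hw0 : f1 en = 0 ∧ f2 en = 0
        · refine ⟨(1, 0), ?_, by rw [hw0.1, mul_zero, zero_mul, add_zero]⟩
          simp [Prod.norm_def]
        · set w : ℂ × ℂ := (-(f2 en), f1 en) with hw
          have hwne : w ≠ 0 := by
            intro h0
            apply hw0
            constructor
            · have := congrArg Prod.snd h0
              simpa [hw] using this
            · have := congrArg Prod.fst h0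
              simpa [hw, neg_eq_zero] using this
          refine ⟨‖w‖⁻¹ • w, ?_, ?_⟩
          · rw [norm_smul, norm_inv, norm_norm, inv_mul_cancel₀ (norm_ne_zero_iff.mpr hwne)]
          · have h1 : (‖w‖⁻¹ • w).1 = ((‖w‖ : ℂ))⁻¹ * w.1 := by
              rw [Prod.smul_fst, Complex.real_smul, Complex.ofReal_inv]
            have h2 : (‖w‖⁻¹ • w).2 = ((‖w‖ : ℂ))⁻¹ * w.2 := by
              rw [Prod.smul_snd, Complex.real_smul, Complex.ofReal_inv]
            rw [h1, h2, hw]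
            push_cast
            ring
      obtain ⟨q, hqnorm, hqe⟩ := hq
      set h : X →L[ℂ] ℂ := q.1 • f1 + q.2 • f2 with hh
      have happ : ∀ u, h u = q.1 * f1 u + q.2 * f2 u := by
        intro u
        rw [hh]
        simp [ContinuousLinearMap.add_apply, ContinuousLinearMap.smul_apply, smul_eq_mul]
      set Sn := A - s n • (1 : X →L[ℂ] X) with hSn
      have hkerh : ∀ u ∈ LinearMap.ker (Sn : X →ₗ[ℂ] X), h u = 0 := by
        intro u hu
        rw [hSn, hkern, Submodule.mem_span_singleton] at hu
        obtain ⟨a, ha⟩ := hu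
        have hhen : h en = 0 := by rw [happ]; exact hqe
        rw [← ha, map_smul, smul_eq_mul, hhen, mul_zero]
      set g : X →L[ℂ] ℂ := h.comp R with hg
      have hgSn : ∀ z, g (Sn z) = h z := by
        intro z
        have h1 : Sn (R (Sn z)) = Sn z := by
          have := congrArg (fun (F : X →L[ℂ] X) => F (Sn z)) hR
          simpa [ContinuousLinearMap.mul_apply, ContinuousLinearMap.one_apply] using this
        have h2 : R (Sn z) - z ∈ LinearMap.ker (Sn : X →ₗ[ℂ] X) := by
          rw [LinearMap.mem_ker, ContinuousLinearMap.coe_coe, map_sub, h1, sub_self]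
        have h3 := hkerh _ h2
        have h4 : h (R (Sn z)) - h z = 0 := by rw [← map_sub]; exact h3
        have h5 : g (Sn z) = h (R (Sn z)) := rfl
        rw [h5]
        exact sub_eq_zero.mp h4
      have hgT : ∀ z, g (T z) = h z + (s n - μ) * g z := by
        intro z
        have h1 : T z = Sn z + (s n - μ) • z := by
          rw [hSn, hshift n]
          simp only [ContinuousLinearMap.sub_apply, ContinuousLinearMap.smul_apply,
            ContinuousLinearMap.one_apply]
          abel
        rw [h1, map_add, hgSn, map_smul, smul_eq_mul]
      have hhnorm : ‖h‖ ≤ K := by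
        rw [hh, hK]
        calc ‖q.1 • f1 + q.2 • f2‖ ≤ ‖q.1 • f1‖ + ‖q.2 • f2‖ := norm_add_le _ _
          _ = ‖q.1‖ * ‖f1‖ + ‖q.2‖ * ‖f2‖ := by
              have e1 : ‖q.1 • f1‖ = ‖q.1‖ * ‖f1‖ := norm_smul q.1 f1
              have e2 : ‖q.2 • f2‖ = ‖q.2‖ * ‖f2‖ := norm_smul q.2 f2
              rw [e1, e2]
          _ ≤ 1 * ‖f1‖ + 1 * ‖f2‖ := by
              gcongr
              · exact le_trans (norm_fst_le q) (le_of_eq hqnorm)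
              · exact le_trans (norm_snd_le q) (le_of_eq hqnorm)
          _ = ‖f1‖ + ‖f2‖ := by ring
      have hgnorm : ‖g‖ ≤ 2 * C * K := by
        have h1 : ‖g.comp T‖ ≤ ‖h‖ + ‖s n - μ‖ * ‖g‖ := by
          have heq : g.comp T = h + (s n - μ) • g := by
            ext z
            rw [ContinuousLinearMap.comp_apply, hgT z]
            simp [ContinuousLinearMap.add_apply, ContinuousLinearMap.smul_apply, smul_eq_mul]
          rw [heq]
          calc ‖h + (s n - μ) • g‖ ≤ ‖h‖ + ‖(s n - μ) • g‖ := norm_add_le _ _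
            _ = ‖h‖ + ‖s n - μ‖ * ‖g‖ := by
                have e1 : ‖(s n - μ) • g‖ = ‖s n - μ‖ * ‖g‖ := norm_smul (s n - μ) g
                rw [e1]
        have h3 : ‖g‖ ≤ C * ‖h‖ + C * ‖s n - μ‖ * ‖g‖ := by
          calc ‖g‖ ≤ C * ‖g.comp T‖ := dual_lb g
            _ ≤ C * (‖h‖ + ‖s n - μ‖ * ‖g‖) := by gcongr
            _ = C * ‖h‖ + C * ‖s n - μ‖ * ‖g‖ := by ring
        have h4 : C * ‖s n - μ‖ * ‖g‖ ≤ (1 / 2) * ‖g‖ :=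
          mul_le_mul_of_nonneg_right hn (norm_nonneg g)
        have h5 : C * ‖h‖ ≤ C * K := by
          have := hhnorm
          nlinarith
        linarith
      refine ⟨q, hqnorm, fun u hu => ?_⟩
      have h1 : T u = 0 := hu
      have h2 : h u = -((s n - μ) * g u) := by
        have h3 := hgT u
        rw [h1, map_zero] at h3
        have h4 : h u + (s n - μ) * g u = 0 := by rw [← h3]
        exact eq_neg_of_add_eq_zero_left h4
      rw [← happ, h2, norm_neg, norm_mul]
      calc ‖s n - μ‖ * ‖g u‖ ≤ ‖s n - μ‖ * (‖g‖ * ‖u‖) :=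
            mul_le_mul_of_nonneg_left (g.le_opNorm u) (norm_nonneg _)
        _ ≤ ‖s n - μ‖ * ((2 * C * K) * ‖u‖) :=
            mul_le_mul_of_nonneg_left
              (mul_le_mul_of_nonneg_right hgnorm (norm_nonneg u)) (norm_nonneg _)
        _ = ‖s n - μ‖ * (2 * C * K) * ‖u‖ := by ring
    have hev : ∀ᶠ n in atTop, C * ‖s n - μ‖ ≤ 1 / 2 := by
      have h1 : Tendsto (fun n => C * ‖s n - μ‖) atTop (𝓝 0) := by
        have h2 : Tendsto (fun n => s n - μ) atTop (𝓝 0) := by simpa using hslim.sub_const μ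
        simpa using h2.norm.const_mul C
      exact (h1.eventually_lt_const (by norm_num : (0:ℝ) < 1 / 2)).mono fun n h => le_of_lt h
    obtain ⟨N, hN⟩ := eventually_atTop.mp hev
    have hqex : ∀ n : ℕ, ∃ q : ℂ × ℂ, ‖q‖ = 1 ∧
        ∀ u, u ∈ LinearMap.ker (T : X →ₗ[ℂ] X) →
          ‖q.1 * f1 u + q.2 * f2 u‖ ≤ ‖s (n + N) - μ‖ * (2 * C * K) * ‖u‖ :=
      fun n => key (n + N) (hN (n + N) (by omega))
    choose q hq1 hq2 using hqex
    have hsph : ∀ n, q n ∈ Metric.sphere (0 : ℂ × ℂ) 1 := fun n => by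
      rw [mem_sphere_zero_iff_norm]; exact hq1 n
    obtain ⟨qlim, hqlim_mem, φ, hφmono, hφtend⟩ :=
      (isCompact_sphere (0 : ℂ × ℂ) 1).tendsto_subseq hsph
    have hslim2 : Tendsto (fun n => s (φ n + N)) atTop (𝓝 μ) := by
      apply hslim.comp
      exact tendsto_atTop_mono (fun n => Nat.le_add_right (φ n) N)
        hφmono.tendsto_atTop
    have hzero : Tendsto (fun n => ‖s (φ n + N) - μ‖ * (2 * C * K)) atTop (𝓝 0) := by
      have h1 := (hslim2.sub_const μ).norm
      simpa using h1.mul_const (2 * C * K)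
    have hlimzero : ∀ u : X, u ∈ LinearMap.ker (T : X →ₗ[ℂ] X) → qlim.1 * f1 u + qlim.2 * f2 u = 0 := by
      intro u hu
      have h1 : Tendsto (fun n => (q (φ n)).1 * f1 u + (q (φ n)).2 * f2 u) atTop (𝓝 0) := by
        apply squeeze_zero_norm (a := fun n => ‖s (φ n + N) - μ‖ * (2 * C * K) * ‖u‖)
        · intro n
          exact hq2 (φ n) u hu
        · simpa using hzero.mul_const ‖u‖
      have h2 : Tendsto (fun n => (q (φ n)).1 * f1 u + (q (φ n)).2 * f2 u) atTop
          (𝓝 (qlim.1 * f1 u + qlim.2 * f2 u)) := by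
        have ha : Tendsto (fun n => (q (φ n)).1) atTop (𝓝 qlim.1) :=
          (continuous_fst.tendsto qlim).comp hφtend
        have hb : Tendsto (fun n => (q (φ n)).2) atTop (𝓝 qlim.2) :=
          (continuous_snd.tendsto qlim).comp hφtend
        exact (ha.mul tendsto_const_nhds).add (hb.mul tendsto_const_nhds)
      exact tendsto_nhds_unique h2 h1
    have ha : qlim.1 = 0 := by
      have h1 := hlimzero v hvmem
      rw [hf1v, hf2v] at h1
      simpa using h1
    have hb : qlim.2 = 0 := by
      have h1 := hlimzero u1' hu1'mem
      rw [hf1u, hf2u] at h1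
      simpa using h1
    have hq0 : qlim = 0 := Prod.ext_iff.mpr ⟨ha, hb⟩
    have h1 := hqlim_mem
    rw [mem_sphere_zero_iff_norm, hq0, norm_zero] at h1
    norm_num at h1


lemma good_subset_sf (A : X →L[ℂ] X) : good A ⊆ semiFredholmDomain A := by
  intro μ hμ
  obtain ⟨hsurj, hrank⟩ := hμ
  refine ⟨?_, Or.inl (Module.finite_of_finrank_eq_succ hrank)⟩
  have htop : LinearMap.range ((A - μ • (1 : X →L[ℂ] X) : X →L[ℂ] X) : X →ₗ[ℂ] X) = ⊤ :=
    LinearMap.range_eq_top.mpr hsurj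
  rw [htop]
  exact isClosed_univ

end CD7Aux


/-- Let `A, B ∈ B(X)` with `A ∘ B = I` and `dim ker A = 1`. If some
nonzero `x ∈ ker A` has `[Bⁿx : n ≥ 0] = X`, then `A ∈ B₁(Ω_A)` where `Ω_A` is the
connected component of the origin in the semi-Fredholm domain of `A`. In particular,
for every `|λ| < 1/‖B‖`, `A − λ` is surjective with one-dimensional kernel, and the
closed linear span of `⋃_{|λ|<1/‖B‖} ker(A − λ)` equals `X`. -/
theorem mem_cowenDouglas_of_right_inverse_and_cyclic
    (X : Type*) [NormedAddCommGroup X] [NormedSpace ℂ X] [CompleteSpace X]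
    (A B : X →L[ℂ] X)
    (hAB : A.comp B = ContinuousLinearMap.id ℂ X)
    (hker : Module.finrank ℂ (LinearMap.ker (A : X →ₗ[ℂ] X)) = 1)
    (x : X) (hx : x ≠ 0) (hxker : A x = 0)
    (hcyc : (Submodule.span ℂ (Set.range fun n : ℕ => (B ^ n) x)).topologicalClosure = ⊤) :
    MemCowenDouglasOne (connectedComponentIn (semiFredholmDomain A) 0) A ∧
    (∀ lam : ℂ, ‖lam‖ < 1 / ‖B‖ →
      Function.Surjective (A - lam • (1 : X →L[ℂ] X)) ∧
        Module.finrank ℂ (LinearMap.ker ((A - lam • (1 : X →L[ℂ] X) : X →L[ℂ] X) : X →ₗ[ℂ] X)) = 1) ∧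
    (Submodule.span ℂ
        (⋃ lam ∈ {lam : ℂ | ‖lam‖ < 1 / ‖B‖},
          ((LinearMap.ker ((A - lam • (1 : X →L[ℂ] X) : X →L[ℂ] X) : X →ₗ[ℂ] X) : Submodule ℂ X) : Set X))
      ).topologicalClosure = ⊤ := by
  classical
  have hABap : ∀ y, A (B y) = y := fun y => by
    have := congrArg (fun F : X →L[ℂ] X => F y) hAB
    simpa using this
  have hAmul : A * B = 1 := by
    ext y
    simpa using hABap y
  have hBne : B ≠ 0 := by
    intro h0
    apply hx
    have h1 := hABap x
    rw [h0] at h1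
    simpa using h1.symm
  have hBpos : 0 < ‖B‖ := by
    rcases lt_or_eq_of_le (norm_nonneg B) with h | h
    · exact h
    · exact absurd ((ContinuousLinearMap.opNorm_zero_iff B).mp h.symm) hBne
  have hdisc_good : ∀ lam : ℂ, ‖lam‖ < 1 / ‖B‖ → lam ∈ CD7Aux.good A := by
    intro lam hlam
    have h1 : ‖lam‖ * ‖B‖ < 1 := by
      rw [lt_div_iff₀ hBpos] at hlam
      exact hlam
    exact CD7Aux.loc A B hAmul hker h1
  have h0good : (0 : ℂ) ∈ CD7Aux.good A := hdisc_good 0 (by rw [norm_zero]; positivity)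
  have hdisc_sf : ∀ lam : ℂ, ‖lam‖ < 1 / ‖B‖ → lam ∈ semiFredholmDomain A :=
    fun lam h => CD7Aux.good_subset_sf A (hdisc_good lam h)
  have h0sf : (0 : ℂ) ∈ semiFredholmDomain A := hdisc_sf 0 (by rw [norm_zero]; positivity)
  set Ω := connectedComponentIn (semiFredholmDomain A) 0 with hΩ
  have hdisc_sub : {lam : ℂ | ‖lam‖ < 1 / ‖B‖} ⊆ Ω := by
    have hball : {lam : ℂ | ‖lam‖ < 1 / ‖B‖} = Metric.ball (0 : ℂ) (1 / ‖B‖) := by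
      ext z
      simp [mem_ball_zero_iff]
    rw [hball, hΩ]
    apply IsPreconnected.subset_connectedComponentIn
    · exact (convex_ball (0 : ℂ) (1 / ‖B‖)).isPreconnected
    · exact Metric.mem_ball_self (by positivity)
    · intro z hz
      exact hdisc_sf z (by rwa [mem_ball_zero_iff] at hz)
  have hΩsub : Ω ⊆ semiFredholmDomain A := connectedComponentIn_subset _ _
  have hkey : ∀ ν ∈ Ω, ν ∈ closure (CD7Aux.good A) → ν ∈ CD7Aux.good A := by
    intro ν hν hc
    have hsf := hΩsub hν
    exact CD7Aux.good_limit A B x hABap hxker hcyc ν hsf.1 hc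
  have hΩgood : Ω ⊆ CD7Aux.good A := by
    intro μ hμ
    by_contra hbad
    have hpre : IsPreconnected Ω := isPreconnected_connectedComponentIn
    have hcover : Ω ⊆ CD7Aux.good A ∪ (closure (CD7Aux.good A))ᶜ := by
      intro ν hν
      by_cases hcn : ν ∈ closure (CD7Aux.good A)
      · exact Or.inl (hkey ν hν hcn)
      · exact Or.inr hcn
    have h1 : (Ω ∩ CD7Aux.good A).Nonempty :=
      ⟨0, mem_connectedComponentIn h0sf, h0good⟩
    have h2 : (Ω ∩ (closure (CD7Aux.good A))ᶜ).Nonempty :=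
      ⟨μ, hμ, fun hc => hbad (hkey μ hμ hc)⟩
    obtain ⟨ν, hνΩ, hν1, hν2⟩ := hpre _ _ (CD7Aux.good_isOpen A)
      isClosed_closure.isOpen_compl hcover h1 h2
    exact hν2 (subset_closure hν1)
  have hBlt : 1 / (2 * (‖B‖ + 1)) < 1 / ‖B‖ := by
    apply one_div_lt_one_div_of_lt hBpos
    nlinarith [norm_nonneg B]
  have hspan_top : ∀ Λ : Set ℂ,
      (∀ lam : ℂ, lam ≠ 0 → ‖lam‖ ≤ 1 / (2 * (‖B‖ + 1)) → lam ∈ Λ) →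
      (Submodule.span ℂ
        (⋃ μ ∈ Λ, ((LinearMap.ker ((A - μ • (1 : X →L[ℂ] X) : X →L[ℂ] X) : X →ₗ[ℂ] X) : Submodule ℂ X) : Set X))
      ).topologicalClosure = ⊤ := by
    intro Λ hΛ
    set M := (Submodule.span ℂ
        (⋃ μ ∈ Λ, ((LinearMap.ker ((A - μ • (1 : X →L[ℂ] X) : X →L[ℂ] X) : X →ₗ[ℂ] X) : Submodule ℂ X) : Set X))
      ).topologicalClosure with hM
    have hMclosed : IsClosed (M : Set X) := Submodule.isClosed_topologicalClosure _
    obtain ⟨s, hs, hslim⟩ := CD7Aux.exists_seq (1 / (2 * (‖B‖ + 1))) (by positivity) 37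
    have hsn : ∀ j, ‖s j‖ * (‖B‖ + 1) ≤ 1 / 2 := fun j => CD7Aux.norm_le_half B (hs j).2.2
    have hmem : ∀ j, CD7Aux.dk B x 0 (s j) ∈ M := by
      intro j
      have h1 : ‖s j‖ * ‖B‖ < 1 := CD7Aux.half_lt_one B (hsn j)
      have h2 : CD7Aux.dk B x 0 (s j) ∈ LinearMap.ker ((A - (s j) • (1 : X →L[ℂ] X) : X →L[ℂ] X) : X →ₗ[ℂ] X) := by
        rw [LinearMap.mem_ker]
        exact CD7Aux.apply_dk0 A B x hABap hxker h1
      apply Submodule.le_topologicalClosure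
      apply Submodule.subset_span
      exact Set.mem_biUnion (hΛ (s j) (hs j).1 (hs j).2.2) h2
    have hall := CD7Aux.coeff_mem B x M hMclosed s (fun j => (hs j).1) hsn hslim hmem
    have hle : Submodule.span ℂ (Set.range fun n : ℕ => (B ^ n) x) ≤ M :=
      Submodule.span_le.mpr (by rintro _ ⟨n, rfl⟩; exact hall n)
    have h2 := Submodule.topologicalClosure_minimal _ hle hMclosed
    rw [hcyc] at h2
    exact eq_top_iff.mpr h2
  refine ⟨⟨?_, ?_, ?_, ?_⟩, ?_, ?_⟩
  · intro μ hμ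
    exact CD7Aux.good_spec A (hΩgood hμ)
  · apply hspan_top
    intro lam hne hb
    apply hdisc_sub
    show ‖lam‖ < 1 / ‖B‖
    exact lt_of_le_of_lt hb hBlt
  · intro μ hμ
    exact (hΩgood hμ).1
  · intro μ hμ
    exact (hΩgood hμ).2
  · intro lam hlam
    exact hdisc_good lam hlam
  · apply hspan_top
    intro lam hne hb
    show ‖lam‖ < 1 / ‖B‖
    exact lt_of_le_of_lt hb hBlt
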